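/- For any q > 0 and positive parameters with σ, θ ∈ [0,1], the quadratic P(I) = A1·I² + A2·I + A3 with A1 = (β/μ)·(ρξ(1-σ)(1-θ)ω/((μ+δ3+ρ)(μ+ξ)(μ+ω+δ1)) − 1)·(1 + σω/(μ+δ2))·(μ+ω+δ1) < 0, A2 = (μ+ω+δ1)(R0 − 1), and A3 = qΛ > 0 has exactly one strictly positive real root (and one strictly negative real root), regardless of whether R0 < 1, R0 = 1, or R0 > 1; hence model (1) with q ≠ 0 always has a unique endemic equilibrium. -/
import Mathlib


open Set

lemma aux_prod_lt (μ ω ρ ξ δ1 δ3 : ℝ) (hμ : 0 < μ) (hω : 0 < ω) (hρ : 0 < ρ)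
    (hξ : 0 < ξ) (hδ1 : 0 < δ1) (hδ3 : 0 < δ3) :
    ρ * ξ * ω < (μ + δ3 + ρ) * (μ + ξ) * (μ + ω + δ1) := by
  have a1 : ρ * ξ * ω < ρ * ξ * (μ + ω + δ1) := by nlinarith [mul_pos hρ hξ]
  have a2 : ρ * ξ * (μ + ω + δ1) < ρ * (μ + ξ) * (μ + ω + δ1) := by
    nlinarith [mul_pos hρ (show (0:ℝ) < μ + ω + δ1 by positivity)]
  have a3 : ρ * (μ + ξ) * (μ + ω + δ1) < (μ + δ3 + ρ) * (μ + ξ) * (μ + ω + δ1) := by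
    nlinarith [mul_pos (show (0:ℝ) < μ + ξ by positivity)
      (show (0:ℝ) < μ + ω + δ1 by positivity)]
  linarith

lemma aux_num_le (ω ρ ξ σ θ : ℝ) (hω : 0 < ω) (hρ : 0 < ρ) (hξ : 0 < ξ)
    (hσ0 : 0 ≤ σ) (hθ0 : 0 ≤ θ) (hσ1 : σ ≤ 1) (hθ1 : θ ≤ 1) :
    ρ * ξ * (1 - σ) * (1 - θ) * ω ≤ ρ * ξ * ω := by
  nlinarith [mul_nonneg (mul_nonneg (mul_nonneg hρ.le hξ.le) hω.le)
      (mul_nonneg hσ0 (sub_nonneg.2 hθ1)),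
    mul_nonneg (mul_nonneg (mul_nonneg hρ.le hξ.le) hω.le) hθ0]

lemma quad_roots (a b c : ℝ) (ha : a < 0) (hc : 0 < c) :
    (∃! x : ℝ, 0 < x ∧ a * x ^ 2 + b * x + c = 0)
    ∧ (∃! x : ℝ, x < 0 ∧ a * x ^ 2 + b * x + c = 0) := by
  have ha' : a ≠ 0 := ne_of_lt ha
  have hD : 0 < b ^ 2 - 4 * a * c := by nlinarith
  set s := Real.sqrt (b ^ 2 - 4 * a * c) with hsdef
  have hs0 : 0 ≤ s := Real.sqrt_nonneg _
  have hs2 : s ^ 2 = b ^ 2 - 4 * a * c := Real.sq_sqrt hD.le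
  have hb1 : b < s := by nlinarith
  have hb2 : -b < s := by nlinarith
  set r1 : ℝ := (-b - s) / (2 * a) with hr1
  set r2 : ℝ := (-b + s) / (2 * a) with hr2
  have hr1pos : 0 < r1 := by
    rw [hr1]
    apply div_pos_of_neg_of_neg <;> linarith
  have hr2neg : r2 < 0 := by
    rw [hr2]
    apply div_neg_of_pos_of_neg <;> linarith
  have key : ∀ x : ℝ, a * x ^ 2 + b * x + c = a * (x - r1) * (x - r2) := by
    intro x
    rw [hr1, hr2]
    field_simp
    nlinarith [hs2, sq_nonneg x]
  have hroot : ∀ x : ℝ, a * x ^ 2 + b * x + c = 0 → x = r1 ∨ x = r2 := by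
    intro x hx
    rw [key] at hx
    rcases mul_eq_zero.1 hx with h | h
    · rcases mul_eq_zero.1 h with h | h
      · exact absurd h ha'
      · left; linarith
    · right; linarith
  have hz1 : a * r1 ^ 2 + b * r1 + c = 0 := by rw [key]; ring
  have hz2 : a * r2 ^ 2 + b * r2 + c = 0 := by rw [key]; ring
  constructor
  · exact ⟨r1, ⟨hr1pos, hz1⟩, fun y ⟨hy, hy0⟩ => by
      rcases hroot y hy0 with h | h
      · exact h
      · exact absurd (h ▸ hy) (not_lt.2 hr2neg.le)⟩
  · exact ⟨r2, ⟨hr2neg, hz2⟩, fun y ⟨hy, hy0⟩ => by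
      rcases hroot y hy0 with h | h
      · exact absurd (h ▸ hy) (not_lt.2 hr1pos.le)
      · exact h⟩

/-- For q > 0, the quadratic P(I) = A1·I² + A2·I + A3 (A1 < 0, A3 = qΛ > 0) has
exactly one strictly positive real root and exactly one strictly negative real
root, regardless of the value of R0; hence model (1) with q ≠ 0 always has a
unique endemic equilibrium. -/
theorem unique_endemic_equilibrium_immigration
    (Λ β μ ω ρ ξ δ1 δ2 δ3 p q σ θ : ℝ)
    (hΛ : 0 < Λ) (hβ : 0 < β) (hμ : 0 < μ) (hω : 0 < ω) (hρ : 0 < ρ)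
    (hξ : 0 < ξ) (hδ1 : 0 < δ1) (hδ2 : 0 < δ2) (hδ3 : 0 < δ3)
    (hq : q ∈ Ioc (0:ℝ) 1) (hp : 0 ≤ p) (hpq : p + q ≤ 1)
    (hσ : σ ∈ Icc (0:ℝ) 1) (hθ : θ ∈ Icc (0:ℝ) 1)
    (R0 A1 A2 A3 : ℝ)
    (hR0 : R0 = β * Λ * (μ * (1 - p) + ξ) / (μ * (μ + ξ) * (μ + ω + δ1))
        * (1 + σ * ω / (μ + δ2)))
    (hA1 : A1 = β / μ
        * (ρ * ξ * (1 - σ) * (1 - θ) * ω / ((μ + δ3 + ρ) * (μ + ξ) * (μ + ω + δ1)) - 1)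
        * (1 + σ * ω / (μ + δ2)) * (μ + ω + δ1))
    (hA2 : A2 = (μ + ω + δ1) * (R0 - 1))
    (hA3 : A3 = q * Λ) :
    A1 < 0 ∧ 0 < A3
      ∧ (∃! x : ℝ, 0 < x ∧ A1 * x ^ 2 + A2 * x + A3 = 0)
      ∧ (∃! x : ℝ, x < 0 ∧ A1 * x ^ 2 + A2 * x + A3 = 0) := by
  obtain ⟨hσ0, hσ1⟩ := hσ
  obtain ⟨hθ0, hθ1⟩ := hθ
  obtain ⟨hq0, hq1⟩ := hq
  have hden : 0 < (μ + δ3 + ρ) * (μ + ξ) * (μ + ω + δ1) := by positivity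
  have hfrac : ρ * ξ * (1 - σ) * (1 - θ) * ω / ((μ + δ3 + ρ) * (μ + ξ) * (μ + ω + δ1)) < 1 := by
    rw [div_lt_one hden]
    have h1 := aux_num_le ω ρ ξ σ θ hω hρ hξ hσ0 hθ0 hσ1 hθ1
    have h2 := aux_prod_lt μ ω ρ ξ δ1 δ3 hμ hω hρ hξ hδ1 hδ3
    linarith
  have hbr : 0 < 1 + σ * ω / (μ + δ2) := by positivity
  have hA1neg : A1 < 0 := by
    rw [hA1]
    have h1 : 0 < β / μ := by positivity
    have h2 : ρ * ξ * (1 - σ) * (1 - θ) * ω / ((μ + δ3 + ρ) * (μ + ξ) * (μ + ω + δ1)) - 1 < 0 := by linarith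
    have h3 : 0 < μ + ω + δ1 := by positivity
    exact mul_neg_of_neg_of_pos (mul_neg_of_neg_of_pos (mul_neg_of_pos_of_neg h1 h2) hbr) h3
  have hA3pos : 0 < A3 := by rw [hA3]; positivity
  exact ⟨hA1neg, hA3pos, quad_roots A1 A2 A3 hA1neg hA3pos⟩
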